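/- Fix λ, μ ∈ ℝ and k ∈ ℤ, let M'(λ,μ) := S · diag(1, e^{−λ}, e^{−μ}, e^{−μ}) · S⁻¹ (a K2 Markov matrix with eigenvalues 1, e^{−λ}, and e^{−μ} with multiplicity two), and let Q'_k be the 4×4 real matrix (1/4)·[[−λ−2μ, −λ+2μ, λ−4πk, λ+4πk], [−λ+2μ, −λ−2μ, λ+4πk, λ−4πk], [λ+4πk, λ−4πk, −λ−2μ, −λ+2μ], [λ−4πk, λ+4πk, −λ+2μ, −λ−2μ]]. Then exp(Q'_k) = M'(λ,μ), and Q'_k is a rate matrix if and only if 4π·|k| ≤ λ and λ ≤ 2μ. In particular, if 4π ≤ λ ≤ 2μ then Q'_0, Q'_1 and Q'_{−1} are three pairwise distinct rate matrices with the same exponential M'(λ,μ). -/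

import Mathlib

open Real

/-- A rate matrix: nonnegative off-diagonal entries, rows sum to 0. -/
def IsRate {k : ℕ} (Q : Matrix (Fin k) (Fin k) ℝ) : Prop :=
  (∀ i j, i ≠ j → 0 ≤ Q i j) ∧ ∀ i, ∑ j, Q i j = 0

/-- The 4×4 Hadamard matrix `S` (over ℝ). -/
def S : Matrix (Fin 4) (Fin 4) ℝ :=
  !![1,  1,  1,  1;
     1,  1, -1, -1;
     1, -1,  1, -1;
     1, -1, -1,  1]

/-- The K2 Markov matrix `M'(λ,μ)` with eigenvalues `1, e^{-λ}, e^{-μ}, e^{-μ}`. -/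
noncomputable def M' (l m : ℝ) : Matrix (Fin 4) (Fin 4) ℝ :=
  S * Matrix.diagonal ![1, exp (-l), exp (-m), exp (-m)] * S⁻¹

/-- The family of real logarithms `Q'_k` of `M'(λ,μ)`. -/
noncomputable def Q' (l m : ℝ) (k : ℤ) : Matrix (Fin 4) (Fin 4) ℝ :=
  (1 / 4 : ℝ) •
    !![-l - 2 * m, -l + 2 * m, l - 4 * π * k, l + 4 * π * k;
       -l + 2 * m, -l - 2 * m, l + 4 * π * k, l - 4 * π * k;
       l + 4 * π * k, l - 4 * π * k, -l - 2 * m, -l + 2 * m;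
       l - 4 * π * k, l + 4 * π * k, -l + 2 * m, -l - 2 * m]

/-- block embedding ring hom -/
noncomputable def psi : (ℝ × ℝ × ℂ) →+* Matrix (Fin 4) (Fin 4) ℝ where
  toFun x := !![x.1, 0, 0, 0;
                0, x.2.1, 0, 0;
                0, 0, x.2.2.re, x.2.2.im;
                0, 0, -x.2.2.im, x.2.2.re]
  map_one' := by
    ext i j
    fin_cases i <;> fin_cases j <;> simp [Matrix.one_apply, Matrix.vecHead, Matrix.vecTail]
  map_mul' x y := by
    ext i j
    fin_cases i <;> fin_cases j <;>
      simp [Matrix.mul_apply, Fin.sum_univ_four, Complex.mul_re, Complex.mul_im, Matrix.vecHead, Matrix.vecTail] <;> ring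
  map_zero' := by
    ext i j
    fin_cases i <;> fin_cases j <;> simp [Matrix.vecHead, Matrix.vecTail]
  map_add' x y := by
    ext i j
    fin_cases i <;> fin_cases j <;> simp [Matrix.vecHead, Matrix.vecTail] <;> ring

lemma psi_cont : Continuous psi := by
  apply continuous_matrix
  intro i j
  fin_cases i <;> fin_cases j <;> simp [psi] <;> fun_prop

lemma S_mul_smul_S : S * ((4 : ℝ)⁻¹ • S) = 1 := by
  ext i j
  fin_cases i <;> fin_cases j <;>
    simp [S, Matrix.mul_apply, Fin.sum_univ_four, Matrix.one_apply , Matrix.vecHead, Matrix.vecTail, Matrix.smul_apply] <;> norm_num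

lemma S_inv : S⁻¹ = (4 : ℝ)⁻¹ • S := Matrix.inv_eq_right_inv S_mul_smul_S

lemma isUnit_S : IsUnit S := (Matrix.isUnit_iff_isUnit_det S).mpr (Matrix.isUnit_det_of_right_inverse S_mul_smul_S)

lemma exp_prod (x : ℝ × ℝ × ℂ) :
    NormedSpace.exp x = (Real.exp x.1, Real.exp x.2.1, Complex.exp x.2.2) := by
  have h1 : (NormedSpace.exp x).1 = NormedSpace.exp x.1 := Prod.fst_exp x
  have h2 : (NormedSpace.exp x).2 = NormedSpace.exp x.2 := Prod.snd_exp x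
  have h21 : (NormedSpace.exp x.2).1 = NormedSpace.exp x.2.1 := Prod.fst_exp x.2
  have h22 : (NormedSpace.exp x.2).2 = NormedSpace.exp x.2.2 := Prod.snd_exp x.2
  have e1 : NormedSpace.exp x.1 = Real.exp x.1 := (congrFun Real.exp_eq_exp_ℝ _).symm
  have e2 : NormedSpace.exp x.2.1 = Real.exp x.2.1 := (congrFun Real.exp_eq_exp_ℝ _).symm
  have e3 : NormedSpace.exp x.2.2 = Complex.exp x.2.2 := by
    exact (congrFun Complex.exp_eq_exp_ℂ _).symm
  ext
  · rw [h1, e1]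
  · rw [h2, h21, e2]
  · rw [h2, h22, e3]

lemma exp_psi (x : ℝ × ℝ × ℂ) :
    NormedSpace.exp (psi x) = psi (Real.exp x.1, Real.exp x.2.1, Complex.exp x.2.2) := by
  letI : SeminormedRing (Matrix (Fin 4) (Fin 4) ℝ) := Matrix.linftyOpSemiNormedRing
  letI : NormedRing (Matrix (Fin 4) (Fin 4) ℝ) := Matrix.linftyOpNormedRing
  letI : NormedAlgebra ℝ (Matrix (Fin 4) (Fin 4) ℝ) := Matrix.linftyOpNormedAlgebra
  rw [← exp_prod]
  exact (NormedSpace.map_exp psi psi_cont x).symm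

set_option maxHeartbeats 1000000 in
lemma Qeq_mul (l m : ℝ) (k : ℤ) :
    Q' l m k * S = S * psi (0, -l, Complex.mk (-m) (2 * π * k)) := by
  ext i j
  fin_cases i <;> fin_cases j <;>
    simp [Q', S, psi, Matrix.mul_apply, Fin.sum_univ_four, Matrix.smul_apply,
      Matrix.vecHead, Matrix.vecTail] <;> ring

lemma Qeq (l m : ℝ) (k : ℤ) :
    Q' l m k = S * psi (0, -l, Complex.mk (-m) (2 * π * k)) * S⁻¹ := by
  rw [S_inv]
  calc Q' l m k = Q' l m k * (S * ((4:ℝ)⁻¹ • S)) := by rw [S_mul_smul_S, Matrix.mul_one]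
  _ = (Q' l m k * S) * ((4:ℝ)⁻¹ • S) := by rw [Matrix.mul_assoc]
  _ = _ := by rw [Qeq_mul]

lemma hz_exp (m : ℝ) (k : ℤ) :
    Complex.exp (Complex.mk (-m) (2 * π * k)) = ((Real.exp (-m) : ℝ) : ℂ) := by
  have h1 : (Complex.mk (-m) (2 * π * k)) = (↑(-m:ℝ)) + (k : ℤ) * (2 * ↑π * Complex.I) := by
    apply Complex.ext <;> simp <;> ring
  rw [h1, Complex.exp_add, Complex.exp_int_mul_two_pi_mul_I, mul_one, Complex.ofReal_exp]

lemma exp_Q' (l m : ℝ) (k : ℤ) : NormedSpace.exp (Q' l m k) = M' l m := by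
  rw [Qeq, Matrix.exp_conj _ _ isUnit_S, exp_psi, M']
  congr 2
  rw [hz_exp]
  ext i j
  fin_cases i <;> fin_cases j <;>
    simp [psi, Matrix.diagonal, Matrix.vecHead, Matrix.vecTail, Real.exp_zero] <;>
    simp [← Complex.ofReal_neg, ← Complex.ofReal_exp]

lemma rate_iff (l m : ℝ) (k : ℤ) :
    IsRate (Q' l m k) ↔ 4 * π * |(k : ℝ)| ≤ l ∧ l ≤ 2 * m := by
  have hpi := Real.pi_pos
  have habs : |4 * π * (k : ℝ)| = 4 * π * |(k : ℝ)| := by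
    rw [abs_mul, abs_of_nonneg (by positivity : (0:ℝ) ≤ 4 * π)]
  constructor
  · rintro ⟨h0, -⟩
    have h1 := h0 0 1 (by decide)
    have h2 := h0 0 2 (by decide)
    have h3 := h0 0 3 (by decide)
    simp [Q', Matrix.smul_apply, Matrix.vecHead, Matrix.vecTail] at h1 h2 h3
    refine ⟨?_, by nlinarith⟩
    rw [← habs]
    exact abs_le.mpr ⟨by nlinarith, by nlinarith⟩
  · rintro ⟨h1, h2⟩
    have hk := abs_le.mp (habs ▸ h1)
    refine ⟨fun i j hij => ?_, fun i => ?_⟩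
    · fin_cases i <;> fin_cases j <;>
        simp_all [Q', Matrix.smul_apply, Matrix.vecHead, Matrix.vecTail] <;>
        nlinarith [hk.1, hk.2]
    · fin_cases i <;>
        simp [Q', Fin.sum_univ_four, Matrix.smul_apply, Matrix.vecHead, Matrix.vecTail] <;>
        ring

/-- `exp (Q'_k) = M'(λ,μ)`; `Q'_k` is a rate matrix iff `4π·|k| ≤ λ` and `λ ≤ 2μ`; and if
`4π ≤ λ ≤ 2μ`, then `Q'_0, Q'_1, Q'_{-1}` are three pairwise distinct rate matrices with
the same exponential `M'(λ,μ)`. -/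
theorem stmt_14 (l m : ℝ) (k : ℤ) :
    NormedSpace.exp (Q' l m k) = M' l m ∧
    (IsRate (Q' l m k) ↔ 4 * π * |(k : ℝ)| ≤ l ∧ l ≤ 2 * m) ∧
    (4 * π ≤ l → l ≤ 2 * m →
      Q' l m 0 ≠ Q' l m 1 ∧ Q' l m 0 ≠ Q' l m (-1) ∧ Q' l m 1 ≠ Q' l m (-1) ∧
      IsRate (Q' l m 0) ∧ IsRate (Q' l m 1) ∧ IsRate (Q' l m (-1)) ∧
      NormedSpace.exp (Q' l m 0) = M' l m ∧
      NormedSpace.exp (Q' l m 1) = M' l m ∧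
      NormedSpace.exp (Q' l m (-1)) = M' l m) := by
  have hpi := Real.pi_pos
  refine ⟨exp_Q' l m k, rate_iff l m k, fun h4 h2m => ?_⟩
  have hdist : ∀ k₁ k₂ : ℤ, k₁ ≠ k₂ → Q' l m k₁ ≠ Q' l m k₂ := by
    intro k₁ k₂ hne h
    have he : Q' l m k₁ 0 3 = Q' l m k₂ 0 3 := by rw [h]
    simp [Q', Matrix.smul_apply, Matrix.vecHead, Matrix.vecTail] at he
    exact hne he
  refine ⟨hdist 0 1 (by decide), hdist 0 (-1) (by decide), hdist 1 (-1) (by decide),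
    ?_, ?_, ?_, exp_Q' l m 0, exp_Q' l m 1, exp_Q' l m (-1)⟩
  · exact (rate_iff l m 0).mpr ⟨by simp; nlinarith, h2m⟩
  · exact (rate_iff l m 1).mpr ⟨by simp; nlinarith, h2m⟩
  · exact (rate_iff l m (-1)).mpr ⟨by simp; nlinarith, h2m⟩
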